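/- O(1/T) rate for the continuous forward–backward flow: Under the assumptions that f : H → ℝ∪{+∞} is proper convex lsc, g : H → ℝ is convex with (1/β)-Lipschitz gradient, argmin(f+g) ≠ ∅, the step size γ > 0 satisfies (γ/β)(3 + γ/β) ≤ 1, and x solves ẋ(t) + x(t) = prox_{γf}(x(t) − γ∇g(x(t))) with x(0) = x₀, then for every T > 0 and every minimizer x* of f+g: 0 ≤ (f+g)(ẋ(T) + x(T)) − (f+g)(x*) + (1/(2γ))‖ẋ(T)‖² ≤ (1/(2γT))‖x₀ − x*‖². -/

import Mathlib

open Filter MeasureTheory Set Topology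
open scoped RealInnerProductSpace

set_option maxHeartbeats 1000000 in
/-- `O(1/T)` rate for the continuous forward–backward flow
`ẋ(t) + x(t) = prox_{γf}(x(t) − γ∇g(x(t)))` (encoded by the subdifferential
characterization of the prox): for every `T > 0` and every minimizer `x*` of
`f+g`, `0 ≤ (f+g)(ẋ(T)+x(T)) − (f+g)(x*) + (1/(2γ))‖ẋ(T)‖² ≤ (1/(2γT))‖x₀−x*‖²`. -/
theorem stmt12
    {H : Type*} [NormedAddCommGroup H] [InnerProductSpace ℝ H] [CompleteSpace H]
    (f : H → ℝ) (hf_cvx : ConvexOn ℝ Set.univ f) (hf_lsc : LowerSemicontinuous f)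
    (g : H → ℝ) (g' : H → H)
    (hg_diff : ∀ z : H, HasGradientAt g (g' z) z)
    (hg_cvx : ∀ a b : H, g a + ⟪g' a, b - a⟫ ≤ g b)
    (β : ℝ) (hβ : 0 < β)
    (hg_lip : ∀ a b : H, ‖g' a - g' b‖ ≤ (1/β) * ‖a - b‖)
    (γ : ℝ) (hγ : 0 < γ) (hstep : (γ/β) * (3 + γ/β) ≤ 1)
    (x xd xdd : ℝ → H) (x₀ : H) (hx0 : x 0 = x₀)
    (hx : ∀ t ≥ (0:ℝ), HasDerivAt x (xd t) t)
    (hprox : ∀ t ≥ (0:ℝ), ∀ y : H,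
      f (xd t + x t) + ⟪-((1/γ) • xd t) - g' (x t), y - (xd t + x t)⟫ ≤ f y)
    (hxdd : ∀ᵐ t ∂(volume.restrict (Ici (0:ℝ))),
      HasDerivAt xd (xdd t) t ∧ ‖xdd t‖ ≤ (2 + γ/β) * ‖xd t‖)
    (hchain_f : ∀ᵐ t ∂(volume.restrict (Ici (0:ℝ))),
      HasDerivAt (fun s => f (xd s + x s))
        ⟪-((1/γ) • xd t) - g' (x t), xdd t + xd t⟫ t)
    (xstar : H) (hmin : ∀ y : H, f xstar + g xstar ≤ f y + g y) :
    ∀ T > (0:ℝ),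
      0 ≤ f (xd T + x T) + g (xd T + x T) - (f xstar + g xstar) +
        (1/(2*γ)) * ‖xd T‖ ^ 2 ∧
      f (xd T + x T) + g (xd T + x T) - (f xstar + g xstar) +
        (1/(2*γ)) * ‖xd T‖ ^ 2 ≤ (1/(2*γ*T)) * ‖x₀ - xstar‖ ^ 2 := by
  -- numeric preliminaries
  have hβ' : β ≠ 0 := ne_of_gt hβ
  have hγ' : γ ≠ 0 := ne_of_gt hγ
  have hγβ : 0 < γ/β := div_pos hγ hβ
  have hq3 : γ/β ≤ 1/3 := by nlinarith [sq_nonneg (γ/β)]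
  have key1 : (1/β) * (1 + γ/β) ≤ 1/γ := by
    have h1 : (γ/β) * (1 + γ/β) ≤ 1 := by nlinarith
    have h2 : (1/β) * (1 + γ/β) = ((γ/β) * (1 + γ/β))/γ := by
      field_simp
    rw [h2]
    gcongr
  have hc2 : (1:ℝ)/β ≤ 1/(2*γ) := by
    have hb : 2*γ ≤ β := by
      have := (div_le_iff₀ hβ).1 hq3; linarith
    exact one_div_le_one_div_of_le (by positivity) hb
  intro T hT
  -- abbreviations
  set u : ℝ → H := fun r => xd r + x r with hu
  set ζ : ℝ → H := fun r => -((1/γ) • xd r) - g' (x r) with hζ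
  set W : ℝ → ℝ := fun r => f (u r) + g (u r) - (f xstar + g xstar) + 1/(2*γ) * ‖xd r‖ ^ 2 with hW
  set Ψ : ℝ → ℝ := fun r => r * W r + 1/(2*γ) * ‖x r - xstar‖ ^ 2 with hΨ
  have hprox' : ∀ t ≥ (0:ℝ), ∀ y : H, f (u t) + ⟪ζ t, y - u t⟫ ≤ f y := by
    intro t ht y; simpa [hu, hζ] using hprox t ht y
  -- subgradient inequality
  have L1 : ∀ t ≥ (0:ℝ), ∀ y : H, f (u t) - f y ≤ ⟪ζ t, u t - y⟫ := by
    intro t ht y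
    have h := hprox' t ht y
    have h2 : ⟪ζ t, y - u t⟫ = -⟪ζ t, u t - y⟫ := by
      rw [show y - u t = -(u t - y) by abel, inner_neg_right]
    linarith [h, h2.le, h2.ge]
  -- convexity of g
  have L4 : ∀ a b : H, g a - g b ≤ ⟪g' a, a - b⟫ := by
    intro a b
    have h := hg_cvx a b
    have h2 : ⟪g' a, b - a⟫ = -⟪g' a, a - b⟫ := by
      rw [show b - a = -(a - b) by abel, inner_neg_right]
    linarith [h, h2.le, h2.ge]
  -- nonexpansiveness of the prox curve
  have L2 : ∀ t ≥ (0:ℝ), ∀ s ≥ (0:ℝ), ‖u t - u s‖ ≤ (1 + γ/β) * ‖x t - x s‖ := by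
    intro t ht s hs
    have h1 := L1 t ht (u s)
    have h2 := L1 s hs (u t)
    have h2' : ⟪ζ s, u s - u t⟫ = -⟪ζ s, u t - u s⟫ := by
      rw [show u s - u t = -(u t - u s) by abel, inner_neg_right]
    have hsum : 0 ≤ ⟪ζ t - ζ s, u t - u s⟫ := by
      rw [inner_sub_left]; linarith
    have hζd : ζ t - ζ s = -((1/γ) • (xd t - xd s)) - (g' (x t) - g' (x s)) := by
      simp only [hζ, smul_sub]; abel
    have hxds : xd t - xd s = (u t - u s) - (x t - x s) := by
      simp only [hu]; abel
    have hexp : ⟪ζ t - ζ s, u t - u s⟫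
        = -(1/γ) * (⟪u t - u s, u t - u s⟫ - ⟪x t - x s, u t - u s⟫)
          - ⟪g' (x t) - g' (x s), u t - u s⟫ := by
      rw [hζd, inner_sub_left, inner_neg_left, real_inner_smul_left, hxds, inner_sub_left]
      ring
    have hself : ⟪u t - u s, u t - u s⟫ = ‖u t - u s‖ ^ 2 := real_inner_self_eq_norm_sq _
    have hcs1 : ⟪x t - x s, u t - u s⟫ ≤ ‖x t - x s‖ * ‖u t - u s‖ := real_inner_le_norm _ _
    have hcs2 : -⟪g' (x t) - g' (x s), u t - u s⟫ ≤ ‖g' (x t) - g' (x s)‖ * ‖u t - u s‖ := by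
      have := real_inner_le_norm (-(g' (x t) - g' (x s))) (u t - u s)
      rwa [inner_neg_left, norm_neg] at this
    have hlip : ‖g' (x t) - g' (x s)‖ ≤ (1/β) * ‖x t - x s‖ := hg_lip _ _
    have hkey : ‖u t - u s‖ ^ 2 ≤ (1 + γ/β) * ‖x t - x s‖ * ‖u t - u s‖ := by
      have hmul : ‖g' (x t) - g' (x s)‖ * ‖u t - u s‖ ≤ ((1/β) * ‖x t - x s‖) * ‖u t - u s‖ :=
        mul_le_mul_of_nonneg_right hlip (norm_nonneg _)
      rw [hexp, hself] at hsum
      have s1 : (1/γ) * (‖u t - u s‖ ^ 2 - ⟪x t - x s, u t - u s⟫)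
          ≤ -⟪g' (x t) - g' (x s), u t - u s⟫ := by linarith
      have s2 : ‖u t - u s‖ ^ 2 - ⟪x t - x s, u t - u s⟫
          ≤ γ * (-⟪g' (x t) - g' (x s), u t - u s⟫) := by
        have hmm := mul_le_mul_of_nonneg_left s1 hγ.le
        have heq : γ * ((1/γ) * (‖u t - u s‖ ^ 2 - ⟪x t - x s, u t - u s⟫))
            = ‖u t - u s‖ ^ 2 - ⟪x t - x s, u t - u s⟫ := by
          field_simp
        linarith [hmm, heq.le, heq.ge]
      have s3 : -⟪g' (x t) - g' (x s), u t - u s⟫ ≤ (1/β) * ‖x t - x s‖ * ‖u t - u s‖ := by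
        linarith
      have s4 : γ * (-⟪g' (x t) - g' (x s), u t - u s⟫)
          ≤ γ * ((1/β) * ‖x t - x s‖ * ‖u t - u s‖) :=
        mul_le_mul_of_nonneg_left s3 hγ.le
      have heq2 : ‖x t - x s‖ * ‖u t - u s‖ + γ * ((1/β) * ‖x t - x s‖ * ‖u t - u s‖)
          = (1 + γ/β) * ‖x t - x s‖ * ‖u t - u s‖ := by
        field_simp
      linarith [hcs1, s2, s4, heq2.le, heq2.ge]
    rcases eq_or_lt_of_le (norm_nonneg (u t - u s)) with h0 | h0
    · rw [← h0]; positivity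
    · exact le_of_mul_le_mul_right (by linarith [hkey]) h0
  have L3 : ∀ t ≥ (0:ℝ), ∀ s ≥ (0:ℝ), ‖xd t - xd s‖ ≤ (2 + γ/β) * ‖x t - x s‖ := by
    intro t ht s hs
    have h1 : xd t - xd s = (u t - u s) - (x t - x s) := by simp only [hu]; abel
    calc ‖xd t - xd s‖ = ‖(u t - u s) - (x t - x s)‖ := by rw [h1]
      _ ≤ ‖u t - u s‖ + ‖x t - x s‖ := norm_sub_le _ _
      _ ≤ (1 + γ/β) * ‖x t - x s‖ + ‖x t - x s‖ := by linarith [L2 t ht s hs]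
      _ = (2 + γ/β) * ‖x t - x s‖ := by ring
  -- continuity facts
  have hg'cont : Continuous g' := by
    have hK : ((Real.toNNReal (1/β)) : ℝ) = 1/β := Real.coe_toNNReal _ (by positivity)
    refine LipschitzWith.continuous (K := Real.toNNReal (1/β)) ?_
    refine LipschitzWith.of_dist_le_mul fun a b => ?_
    rw [dist_eq_norm, dist_eq_norm, hK]
    exact hg_lip a b
  have hxcont : ∀ s ≥ (0:ℝ), ContinuousWithinAt x (Ici 0) s := by
    intro s hs; exact (hx s hs).continuousAt.continuousWithinAt
  have hxdcont : ∀ s ≥ (0:ℝ), ContinuousWithinAt xd (Ici 0) s := by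
    intro s hs
    have hdiff : Tendsto (fun z => xd z - xd s) (𝓝[Ici 0] s) (𝓝 0) := by
      apply squeeze_zero_norm' (a := fun z => (2 + γ/β) * ‖x z - x s‖)
      · filter_upwards [eventually_mem_nhdsWithin] with z hz
        exact L3 z hz s hs
      · have hx0' : Tendsto (fun z => x z - x s) (𝓝[Ici 0] s) (𝓝 0) := by
          have hcx : Tendsto x (𝓝[Ici 0] s) (𝓝 (x s)) := hxcont s hs
          simpa using hcx.sub_const (x s)
        simpa using (hx0'.norm.const_mul (2 + γ/β))
    have := hdiff.add (tendsto_const_nhds (x := xd s))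
    rw [ContinuousWithinAt]; simpa using this
  have hucont : ∀ s ≥ (0:ℝ), ContinuousWithinAt u (Ici 0) s := by
    intro s hs
    have := (hxdcont s hs).add (hxcont s hs)
    exact this
  have hζcont : ∀ s ≥ (0:ℝ), ContinuousWithinAt ζ (Ici 0) s := by
    intro s hs
    have h1 : ContinuousWithinAt (fun r => -((1/γ) • xd r)) (Ici 0) s :=
      ((hxdcont s hs).const_smul (1/γ)).neg
    have h2 : ContinuousWithinAt (fun r => g' (x r)) (Ici 0) s :=
      hg'cont.continuousAt.comp_continuousWithinAt (hxcont s hs)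
    have := h1.sub h2
    exact this
  have hfucont : ∀ s ≥ (0:ℝ), ContinuousWithinAt (fun r => f (u r)) (Ici 0) s := by
    intro s hs
    rw [ContinuousWithinAt, tendsto_iff_dist_tendsto_zero]
    apply squeeze_zero' (g := fun z => (‖ζ z‖ + ‖ζ s‖) * ‖u z - u s‖)
      (Eventually.of_forall fun z => dist_nonneg)
    · filter_upwards [eventually_mem_nhdsWithin] with z hz
      have a1 : f (u z) - f (u s) ≤ ⟪ζ z, u z - u s⟫ := L1 z hz (u s)
      have a2 : f (u s) - f (u z) ≤ ⟪ζ s, u s - u z⟫ := L1 s hs (u z)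
      have b1 : ⟪ζ z, u z - u s⟫ ≤ ‖ζ z‖ * ‖u z - u s‖ := real_inner_le_norm _ _
      have b2 : ⟪ζ s, u s - u z⟫ ≤ ‖ζ s‖ * ‖u s - u z‖ := real_inner_le_norm _ _
      rw [norm_sub_rev (u s) (u z)] at b2
      rw [Real.dist_eq, abs_le]
      constructor
      · linarith [a2, b2, mul_nonneg (norm_nonneg (ζ z)) (norm_nonneg (u z - u s))]
      · linarith [a1, b1, mul_nonneg (norm_nonneg (ζ s)) (norm_nonneg (u z - u s))]
    · have h1 : Tendsto (fun z => ‖ζ z‖ + ‖ζ s‖) (𝓝[Ici 0] s) (𝓝 (‖ζ s‖ + ‖ζ s‖)) :=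
        ((hζcont s hs).norm).add tendsto_const_nhds
      have h2 : Tendsto (fun z => ‖u z - u s‖) (𝓝[Ici 0] s) (𝓝 0) := by
        have hcu : Tendsto u (𝓝[Ici 0] s) (𝓝 (u s)) := hucont s hs
        simpa using (hcu.sub_const (u s)).norm
      simpa using h1.mul h2
  have hWcont : ∀ s ≥ (0:ℝ), ContinuousWithinAt W (Ici 0) s := by
    intro s hs
    have cg : ContinuousWithinAt (fun r => g (u r)) (Ici 0) s :=
      (hg_diff (u s)).continuousAt.comp_continuousWithinAt (hucont s hs)
    have cn : ContinuousWithinAt (fun r => 1/(2*γ) * ‖xd r‖ ^ 2) (Ici 0) s :=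
      (((hxdcont s hs).norm).pow 2).const_mul _
    have hsum : ContinuousWithinAt
        (fun r => f (u r) + g (u r) - (f xstar + g xstar) + 1/(2*γ) * ‖xd r‖ ^ 2)
        (Ici 0) s := (((hfucont s hs).add cg).sub continuousWithinAt_const).add cn
    simpa [hW] using hsum
  have hΨcontOn : ContinuousOn Ψ (Icc 0 T) := by
    intro s hs
    have hs0 : (0:ℝ) ≤ s := hs.1
    have c1 : ContinuousWithinAt (fun r => r * W r) (Ici 0) s :=
      continuousWithinAt_id.mul (hWcont s hs0)
    have c2 : ContinuousWithinAt (fun r => 1/(2*γ) * ‖x r - xstar‖ ^ 2) (Ici 0) s :=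
      ((((hxcont s hs0).sub continuousWithinAt_const).norm).pow 2).const_mul _
    exact ((c1.add c2).mono Icc_subset_Ici_self : ContinuousWithinAt Ψ (Icc 0 T) s)
  -- main differential inequalities (finite-difference form)
  have E1' : ∀ s ≥ (0:ℝ), ∀ t ≥ (0:ℝ), W t - W s
      ≤ (1/β) * (1 + γ/β) * (‖xd t‖ * ‖x t - x s‖) - (1/γ) * ⟪xd t, x t - x s⟫ := by
    intro s hs t ht
    have h1 : f (u t) - f (u s) ≤ ⟪ζ t, u t - u s⟫ := L1 t ht (u s)
    have h2 : g (u t) - g (u s) ≤ ⟪g' (u t), u t - u s⟫ := L4 (u t) (u s)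
    have h3 : 1/(2*γ) * ‖xd t‖ ^ 2 - 1/(2*γ) * ‖xd s‖ ^ 2 ≤ (1/γ) * ⟪xd t, xd t - xd s⟫ := by
      have hexp : ‖xd s‖ ^ 2 = ‖xd t‖ ^ 2 - 2 * ⟪xd t, xd t - xd s⟫ + ‖xd t - xd s‖ ^ 2 := by
        have := norm_sub_sq_real (xd t) (xd t - xd s)
        simpa using this
      have h0 : (0:ℝ) ≤ 1/(2*γ) := by positivity
      have hhalf : 1/(2*γ) * 2 = 1/γ := by ring
      nlinarith [mul_nonneg h0 (sq_nonneg ‖xd t - xd s‖)]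
    have hsplit : u t - u s = (xd t - xd s) + (x t - x s) := by simp only [hu]; abel
    have hvec : ⟪ζ t, u t - u s⟫ + ⟪g' (u t), u t - u s⟫ + (1/γ) * ⟪xd t, xd t - xd s⟫
        = ⟪g' (u t) - g' (x t), u t - u s⟫ - (1/γ) * ⟪xd t, x t - x s⟫ := by
      simp only [hζ, hsplit, inner_add_right, inner_sub_left, inner_neg_left,
        real_inner_smul_left]
      ring
    have hbnd : ⟪g' (u t) - g' (x t), u t - u s⟫
        ≤ ((1/β) * ‖xd t‖) * ((1 + γ/β) * ‖x t - x s‖) := by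
      have hcs := real_inner_le_norm (g' (u t) - g' (x t)) (u t - u s)
      have hl : ‖g' (u t) - g' (x t)‖ ≤ (1/β) * ‖xd t‖ := by
        have := hg_lip (u t) (x t)
        have hx' : u t - x t = xd t := by simp only [hu]; abel
        rwa [hx'] at this
      have hmul : ‖g' (u t) - g' (x t)‖ * ‖u t - u s‖
          ≤ ((1/β) * ‖xd t‖) * ((1 + γ/β) * ‖x t - x s‖) := by
        apply mul_le_mul hl (L2 t ht s hs) (norm_nonneg _) (by positivity)
      linarith
    have hWdiff : W t - W s = (f (u t) - f (u s)) + (g (u t) - g (u s))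
        + (1/(2*γ) * ‖xd t‖ ^ 2 - 1/(2*γ) * ‖xd s‖ ^ 2) := by
      simp only [hW]; ring
    have hring : ((1/β) * ‖xd t‖) * ((1 + γ/β) * ‖x t - x s‖)
        = (1/β) * (1 + γ/β) * (‖xd t‖ * ‖x t - x s‖) := by ring
    linarith [h1, h2, h3, hvec.le, hvec.ge, hbnd]
  have E2 : ∀ t ≥ (0:ℝ), W t ≤ (1/γ) * ⟪xd t, xstar - x t⟫ + (1/β - 1/(2*γ)) * ‖xd t‖ ^ 2 := by
    intro t ht
    have h1 : f (u t) - f xstar ≤ ⟪ζ t, u t - xstar⟫ := L1 t ht xstar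
    have h2 : g (u t) - g (x t) ≤ ⟪g' (u t), xd t⟫ := by
      have := L4 (u t) (x t)
      have hx' : u t - x t = xd t := by simp only [hu]; abel
      rwa [hx'] at this
    have h3 : g (x t) - g xstar ≤ ⟪g' (x t), x t - xstar⟫ := L4 (x t) xstar
    have h4 : ⟪g' (u t) - g' (x t), xd t⟫ ≤ (1/β) * ‖xd t‖ ^ 2 := by
      have hcs := real_inner_le_norm (g' (u t) - g' (x t)) (xd t)
      have hl : ‖g' (u t) - g' (x t)‖ ≤ (1/β) * ‖xd t‖ := by
        have := hg_lip (u t) (x t)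
        have hx' : u t - x t = xd t := by simp only [hu]; abel
        rwa [hx'] at this
      nlinarith [norm_nonneg (xd t)]
    have hsplit2 : u t - xstar = xd t + (x t - xstar) := by simp only [hu]; abel
    have hxst : xstar - x t = -(x t - xstar) := by abel
    have hvec2 : ⟪ζ t, u t - xstar⟫ + ⟪g' (u t), xd t⟫ + ⟪g' (x t), x t - xstar⟫
        = ⟪g' (u t) - g' (x t), xd t⟫ + (1/γ) * ⟪xd t, xstar - x t⟫ - (1/γ) * ⟪xd t, xd t⟫ := by
      simp only [hζ, hsplit2, hxst, inner_add_right, inner_neg_right, inner_sub_left,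
        inner_neg_left, real_inner_smul_left]
      ring
    have hself : ⟪xd t, xd t⟫ = ‖xd t‖ ^ 2 := real_inner_self_eq_norm_sq _
    have hWdef : W t = (f (u t) - f xstar) + (g (u t) - g (x t)) + (g (x t) - g xstar)
        + 1/(2*γ) * ‖xd t‖ ^ 2 := by simp only [hW]; ring
    have hrel2 : (1/γ) * ‖xd t‖ ^ 2 = 1/(2*γ) * ‖xd t‖ ^ 2 + 1/(2*γ) * ‖xd t‖ ^ 2 := by
      ring
    have hsum : W t ≤ ⟪g' (u t) - g' (x t), xd t⟫ + (1/γ) * ⟪xd t, xstar - x t⟫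
        - (1/γ) * ⟪xd t, xd t⟫ + 1/(2*γ) * ‖xd t‖ ^ 2 := by
      linarith [h1, h2, h3, hvec2.le, hWdef.le, hWdef.ge]
    rw [hself] at hsum
    linarith [h4, hrel2.le, hrel2.ge, hsum]
  have E3 : ∀ t s : ℝ, ‖x t - xstar‖ ^ 2 - ‖x s - xstar‖ ^ 2
      ≤ 2 * ⟪x t - xstar, x t - x s⟫ := by
    intro t s
    have h := norm_sub_sq_real (x t - xstar) (x t - x s)
    have h2 : x t - xstar - (x t - x s) = x s - xstar := by abel
    rw [h2] at h
    nlinarith [sq_nonneg ‖x t - x s‖]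
  -- the fencing argument
  have hΨT : Ψ T ≤ Ψ 0 := by
    have hbound : ∀ p ∈ Ico (0:ℝ) T, ∀ r, (fun _ : ℝ => (0:ℝ)) p < r
        → ∃ᶠ z in 𝓝[>] p, slope Ψ p z < r := by
      intro p hp r hr
      simp only at hr
      have hp0 : (0:ℝ) ≤ p := hp.1
      have hmono : 𝓝[>] p ≤ 𝓝[Ici (0:ℝ)] p :=
        nhdsWithin_mono p (fun z hz => le_trans hp0 (le_of_lt hz))
      set q : ℝ → H := fun z => (z - p)⁻¹ • (x z - x p) with hqdef
      set Ub : ℝ → ℝ := fun z => p * ((1/β) * (1 + γ/β) * (‖xd z‖ * ‖q z‖)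
            - (1/γ) * ⟪xd z, q z⟫)
          + ((1/γ) * ⟪xd z, xstar - x z⟫ + (1/β - 1/(2*γ)) * ‖xd z‖ ^ 2)
          + (1/γ) * ⟪x z - xstar, q z⟫ with hUdef
      have hqt : Tendsto q (𝓝[>] p) (𝓝 (xd p)) := by
        have hsl := hasDerivAt_iff_tendsto_slope.1 (hx p hp0)
        have heq : slope x p = q := by
          funext z; rw [slope_def_module]
        rw [heq] at hsl
        exact hsl.mono_left (nhdsWithin_mono p
          (fun z hz => Set.mem_compl_singleton_iff.2 (ne_of_gt hz)))
      have hxdt : Tendsto xd (𝓝[>] p) (𝓝 (xd p)) := (hxdcont p hp0).mono_left hmono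
      have hxt : Tendsto x (𝓝[>] p) (𝓝 (x p)) := (hxcont p hp0).mono_left hmono
      have hN : Tendsto (fun z => ‖xd z‖) (𝓝[>] p) (𝓝 ‖xd p‖) := hxdt.norm
      have hNq : Tendsto (fun z => ‖q z‖) (𝓝[>] p) (𝓝 ‖xd p‖) := hqt.norm
      have hI1 : Tendsto (fun z => ⟪xd z, q z⟫) (𝓝[>] p) (𝓝 ⟪xd p, xd p⟫) := hxdt.inner hqt
      have hI2 : Tendsto (fun z => ⟪xd z, xstar - x z⟫) (𝓝[>] p)
          (𝓝 ⟪xd p, xstar - x p⟫) := hxdt.inner (tendsto_const_nhds.sub hxt)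
      have hI3 : Tendsto (fun z => ⟪x z - xstar, q z⟫) (𝓝[>] p)
          (𝓝 ⟪x p - xstar, xd p⟫) := (hxt.sub tendsto_const_nhds).inner hqt
      have hUt : Tendsto Ub (𝓝[>] p)
          (𝓝 (p * ((1/β) * (1 + γ/β) * (‖xd p‖ * ‖xd p‖) - (1/γ) * ⟪xd p, xd p⟫)
            + ((1/γ) * ⟪xd p, xstar - x p⟫ + (1/β - 1/(2*γ)) * ‖xd p‖ ^ 2)
            + (1/γ) * ⟪x p - xstar, xd p⟫)) := by
        rw [hUdef]
        exact ((tendsto_const_nhds.mul ((tendsto_const_nhds.mul (hN.mul hNq)).sub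
            (tendsto_const_nhds.mul hI1))).add
          ((tendsto_const_nhds.mul hI2).add (tendsto_const_nhds.mul (hN.pow 2)))).add
          (tendsto_const_nhds.mul hI3)
      have hL0 : p * ((1/β) * (1 + γ/β) * (‖xd p‖ * ‖xd p‖) - (1/γ) * ⟪xd p, xd p⟫)
            + ((1/γ) * ⟪xd p, xstar - x p⟫ + (1/β - 1/(2*γ)) * ‖xd p‖ ^ 2)
            + (1/γ) * ⟪x p - xstar, xd p⟫ ≤ 0 := by
        have hself : ⟪xd p, xd p⟫ = ‖xd p‖ ^ 2 := real_inner_self_eq_norm_sq _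
        have hcomm : ⟪x p - xstar, xd p⟫ = -⟪xd p, xstar - x p⟫ := by
          rw [real_inner_comm, show xstar - x p = -(x p - xstar) by abel, inner_neg_right,
            neg_neg]
        have hint1 : 0 ≤ p * ((1/γ - (1/β) * (1 + γ/β)) * ‖xd p‖ ^ 2) :=
          mul_nonneg hp0 (mul_nonneg (sub_nonneg.2 key1) (sq_nonneg _))
        have hint2 : 0 ≤ (1/(2*γ) - 1/β) * ‖xd p‖ ^ 2 :=
          mul_nonneg (sub_nonneg.2 hc2) (sq_nonneg _)
        rw [hself, hcomm]
        linarith [hint1, hint2]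
      have hslope : ∀ z ∈ Ioi p, slope Ψ p z ≤ Ub z := by
        intro z hz
        have hz0 : (0:ℝ) ≤ z := le_trans hp0 (le_of_lt hz)
        have hzp : (0:ℝ) < z - p := sub_pos.2 hz
        have hE1 := E1' p hp0 z hz0
        have hE2 := E2 z hz0
        have hE3 := E3 z p
        have hΨdiff : Ψ z - Ψ p = p * (W z - W p) + (z - p) * W z
            + 1/(2*γ) * (‖x z - xstar‖ ^ 2 - ‖x p - xstar‖ ^ 2) := by
          simp only [hΨ]; ring
        have hxq : x z - x p = (z - p) • q z := by
          rw [hqdef]; exact (smul_inv_smul₀ (ne_of_gt hzp) _).symm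
        have hnq : ‖x z - x p‖ = (z - p) * ‖q z‖ := by
          rw [hxq, norm_smul, Real.norm_eq_abs, abs_of_pos hzp]
        have hiq1 : ⟪xd z, x z - x p⟫ = (z - p) * ⟪xd z, q z⟫ := by
          rw [hxq, real_inner_smul_right]
        have hiq2 : ⟪x z - xstar, x z - x p⟫ = (z - p) * ⟪x z - xstar, q z⟫ := by
          rw [hxq, real_inner_smul_right]
        have m1 : p * (W z - W p) ≤ p * ((1/β) * (1 + γ/β) * (‖xd z‖ * ((z - p) * ‖q z‖))
            - (1/γ) * ((z - p) * ⟪xd z, q z⟫)) := by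
          apply mul_le_mul_of_nonneg_left _ hp0
          rw [← hnq, ← hiq1]; exact hE1
        have m2 : (z - p) * W z ≤ (z - p) * ((1/γ) * ⟪xd z, xstar - x z⟫
            + (1/β - 1/(2*γ)) * ‖xd z‖ ^ 2) :=
          mul_le_mul_of_nonneg_left hE2 hzp.le
        have m3 : 1/(2*γ) * (‖x z - xstar‖ ^ 2 - ‖x p - xstar‖ ^ 2)
            ≤ 1/(2*γ) * (2 * ((z - p) * ⟪x z - xstar, q z⟫)) := by
          apply mul_le_mul_of_nonneg_left _ (by positivity)
          rw [← hiq2]; exact hE3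
        have hcomb : Ψ z - Ψ p ≤ (z - p) * Ub z := by
          rw [hΨdiff, hUdef]
          have hend : p * ((1/β) * (1 + γ/β) * (‖xd z‖ * ((z - p) * ‖q z‖))
              - (1/γ) * ((z - p) * ⟪xd z, q z⟫))
              + (z - p) * ((1/γ) * ⟪xd z, xstar - x z⟫ + (1/β - 1/(2*γ)) * ‖xd z‖ ^ 2)
              + 1/(2*γ) * (2 * ((z - p) * ⟪x z - xstar, q z⟫))
              = (z - p) * (p * ((1/β) * (1 + γ/β) * (‖xd z‖ * ‖q z‖)
                  - (1/γ) * ⟪xd z, q z⟫)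
                + ((1/γ) * ⟪xd z, xstar - x z⟫ + (1/β - 1/(2*γ)) * ‖xd z‖ ^ 2)
                + (1/γ) * ⟪x z - xstar, q z⟫) := by
            ring
          linarith [m1, m2, m3, hend.le, hend.ge]
        rw [slope_def_field, div_le_iff₀ hzp]
        linarith [hcomb]
      have hev1 : ∀ᶠ z in 𝓝[>] p, slope Ψ p z ≤ Ub z := by
        filter_upwards [self_mem_nhdsWithin] with z hz
        exact hslope z hz
      have hev2 : ∀ᶠ z in 𝓝[>] p, Ub z < r := hUt.eventually_lt_const (lt_of_le_of_lt hL0 hr)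
      exact ((hev1.and hev2).mono fun z hz => lt_of_le_of_lt hz.1 hz.2).frequently
    have happ := image_le_of_liminf_slope_right_le_deriv_boundary
      (f := Ψ) (a := 0) (b := T) (B := fun _ => Ψ 0) (B' := fun _ => 0)
      hΨcontOn le_rfl continuousOn_const
      (fun z _ => hasDerivWithinAt_const z _ (Ψ 0)) hbound
    exact happ (right_mem_Icc.2 hT.le)
  have hΨ0 : Ψ 0 = 1/(2*γ) * ‖x₀ - xstar‖ ^ 2 := by
    simp only [hΨ, hx0]; ring
  have hWT : W T ≤ 1/(2*γ*T) * ‖x₀ - xstar‖ ^ 2 := by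
    rw [hΨ0] at hΨT
    simp only [hΨ] at hΨT
    have hnn : 0 ≤ 1/(2*γ) * ‖x T - xstar‖ ^ 2 := by positivity
    have h1 : T * W T ≤ 1/(2*γ) * ‖x₀ - xstar‖ ^ 2 := by linarith
    have h2 : 1/(2*γ*T) * ‖x₀ - xstar‖ ^ 2 = (1/(2*γ) * ‖x₀ - xstar‖ ^ 2)/T := by
      ring
    rw [h2, le_div_iff₀ hT]
    linarith [h1]
  constructor
  · have hm := hmin (xd T + x T)
    have hnn : 0 ≤ 1/(2*γ) * ‖xd T‖ ^ 2 := by positivity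
    linarith
  · simpa only [hW, hu] using hWT
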